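/- Every 2×n transportation polytope P(u,v) with positive margins has graph diameter at most n: for any two vertices O and F of P(u,v) there is an edge walk from O to F of length at most n. -/

import Mathlib

def TP (m n : ℕ) (u : Fin m → ℝ) (v : Fin n → ℝ) : Set (Matrix (Fin m) (Fin n) ℝ) :=
  {y | (∀ i j, 0 ≤ y i j) ∧ (∀ i, ∑ j, y i j = u i) ∧ (∀ j, ∑ i, y i j = v j)}

def AdjVert (m n : ℕ) (u : Fin m → ℝ) (v : Fin n → ℝ)
    (y z : Matrix (Fin m) (Fin n) ℝ) : Prop :=
  y ≠ z ∧ y ∈ Set.extremePoints ℝ (TP m n u v) ∧ z ∈ Set.extremePoints ℝ (TP m n u v) ∧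
    IsExtreme ℝ (TP m n u v) (segment ℝ y z)

namespace TPwork
open Finset

variable {n : ℕ}

/-- membership in the slice-of-box polytope (row-0 coordinates). -/
def InQ (v : Fin n → ℝ) (c : ℝ) (x : Fin n → ℝ) : Prop :=
  (∀ j, 0 ≤ x j ∧ x j ≤ v j) ∧ ∑ j, x j = c

/-- vertex: in Q with at most one fractional coordinate. -/
def Vtx (v : Fin n → ℝ) (c : ℝ) (x : Fin n → ℝ) : Prop :=
  InQ v c x ∧ ∀ j k, (0 < x j ∧ x j < v j) → (0 < x k ∧ x k < v k) → j = k

/-- the corresponding matrix. -/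
def mat (v : Fin n → ℝ) (x : Fin n → ℝ) : Matrix (Fin 2) (Fin n) ℝ :=
  fun i j => if i.val = 0 then x j else v j - x j

lemma mat_inj {v x x' : Fin n → ℝ} (h : mat v x = mat v x') : x = x' := by
  funext j
  have := congrFun (congrFun h 0) j
  simpa [mat] using this

/-- a mass transfer between two coordinates. -/
def mv (x : Fin n → ℝ) (a b : Fin n) (δ : ℝ) : Fin n → ℝ :=
  fun j => if j = a then x a - δ else if j = b then x b + δ else x j

lemma mv_a {x : Fin n → ℝ} {a b : Fin n} {δ : ℝ} : mv x a b δ a = x a - δ := by simp [mv]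

lemma mv_b {x : Fin n → ℝ} {a b : Fin n} {δ : ℝ} (hab : a ≠ b) : mv x a b δ b = x b + δ := by
  simp [mv, hab.symm]

lemma mv_other {x : Fin n → ℝ} {a b : Fin n} {δ : ℝ} {j : Fin n} (hja : j ≠ a) (hjb : j ≠ b) :
    mv x a b δ j = x j := by simp [mv, hja, hjb]

lemma sum_mv {x : Fin n → ℝ} {a b : Fin n} {δ : ℝ} (hab : a ≠ b) :
    ∑ j, mv x a b δ j = ∑ j, x j := by
  have h : ∀ j, mv x a b δ j = x j + ((if j = a then -δ else 0) + (if j = b then δ else 0)) := by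
    intro j
    by_cases hja : j = a
    · subst hja; simp [mv_a, hab]; ring
    · by_cases hjb : j = b
      · subst hjb; rw [mv_b hab]; simp [hja]
      · rw [mv_other hja hjb]; simp [hja, hjb]
  calc ∑ j, mv x a b δ j
      = ∑ j, (x j + ((if j = a then -δ else 0) + (if j = b then δ else 0))) :=
        Finset.sum_congr rfl (fun j _ => h j)
    _ = ∑ j, x j := by
        rw [Finset.sum_add_distrib, Finset.sum_add_distrib, Finset.sum_ite_eq' univ a,
          Finset.sum_ite_eq' univ b]
        simp

/-- if sums agree and the functions agree off one index, they agree there too. -/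
lemma eq_of_sum_eq {x y : Fin n → ℝ} (hs : ∑ j, x j = ∑ j, y j) (p : Fin n)
    (h : ∀ j, j ≠ p → x j = y j) : x p = y p := by
  have h1 := Finset.sum_erase_add (univ : Finset (Fin n)) x (mem_univ p)
  have h2 := Finset.sum_erase_add (univ : Finset (Fin n)) y (mem_univ p)
  have he : ∑ j ∈ univ.erase p, x j = ∑ j ∈ univ.erase p, y j :=
    Finset.sum_congr rfl (fun j hj => h j (Finset.ne_of_mem_erase hj))
  linarith [h1, h2]

/-- existence of a strictly larger coordinate given equal sums and a strictly smaller one. -/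
lemma exists_gt_of_lt {v : Fin n → ℝ} {c : ℝ} {x y : Fin n → ℝ} (hx : InQ v c x) (hy : InQ v c y)
    {j : Fin n} (hj : x j < y j) : ∃ a, y a < x a := by
  by_contra hcon
  push_neg at hcon
  have : ∑ j, x j < ∑ j, y j :=
    Finset.sum_lt_sum (fun i _ => hcon i) ⟨j, mem_univ j, hj⟩
  rw [hx.2, hy.2] at this
  exact lt_irrefl _ this

lemma exists_lt_of_gt {v : Fin n → ℝ} {c : ℝ} {x y : Fin n → ℝ} (hx : InQ v c x) (hy : InQ v c y)
    {j : Fin n} (hj : y j < x j) : ∃ b, x b < y b := by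
  obtain ⟨a, ha⟩ := exists_gt_of_lt hy hx hj
  exact ⟨a, ha⟩

lemma exists_ne_of_ne {x y : Fin n → ℝ} (h : x ≠ y) : ∃ j, x j ≠ y j := by
  by_contra hcon; push_neg at hcon; exact h (funext hcon)


variable {u : Fin 2 → ℝ} {v : Fin n → ℝ}

lemma mat_mem_TP (huv : ∑ i, u i = ∑ j, v j) {x : Fin n → ℝ} (hx : InQ v (u 0) x) :
    mat v x ∈ TP 2 n u v := by
  refine ⟨?_, ?_, ?_⟩
  · intro i j
    fin_cases i
    · simpa [mat] using (hx.1 j).1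
    · simpa [mat] using sub_nonneg.2 (hx.1 j).2
  · intro i
    fin_cases i
    · simpa [mat] using hx.2
    · have hsum : u 0 + u 1 = ∑ j, v j := by
        rw [← huv, Fin.sum_univ_two]
      simp only [mat]
      norm_num
      rw [hx.2]
      linarith
  · intro j
    rw [Fin.sum_univ_two]
    simp [mat]

lemma TP_row1 {y : Matrix (Fin 2) (Fin n) ℝ} (hy : y ∈ TP 2 n u v) (j : Fin n) :
    y 1 j = v j - y 0 j := by
  have := hy.2.2 j
  rw [Fin.sum_univ_two] at this
  linarith

lemma TP_eq_mat {y : Matrix (Fin 2) (Fin n) ℝ} (hy : y ∈ TP 2 n u v) :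
    y = mat v (fun j => y 0 j) := by
  funext i j
  fin_cases i
  · simp [mat]
  · simp [mat, TP_row1 hy j]

lemma TP_row0_InQ {y : Matrix (Fin 2) (Fin n) ℝ} (hy : y ∈ TP 2 n u v) :
    InQ v (u 0) (fun j => y 0 j) := by
  refine ⟨fun j => ⟨hy.1 0 j, ?_⟩, hy.2.1 0⟩
  have h1 : (0:ℝ) ≤ y 1 j := hy.1 1 j
  have := TP_row1 hy j
  linarith

lemma convex_TP : Convex ℝ (TP 2 n u v) := by
  rintro y hy z hz a b ha hb hab
  refine ⟨?_, ?_, ?_⟩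
  · intro i j
    have := hy.1 i j; have := hz.1 i j
    simp only [Matrix.add_apply, Matrix.smul_apply, smul_eq_mul]
    positivity
  · intro i
    simp only [Matrix.add_apply, Matrix.smul_apply, smul_eq_mul]
    rw [Finset.sum_add_distrib, ← Finset.mul_sum, ← Finset.mul_sum, hy.2.1 i, hz.2.1 i,
      ← add_mul, hab, one_mul]
  · intro j
    simp only [Matrix.add_apply, Matrix.smul_apply, smul_eq_mul]
    rw [Finset.sum_add_distrib, ← Finset.mul_sum, ← Finset.mul_sum, hy.2.2 j, hz.2.2 j,
      ← add_mul, hab, one_mul]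


lemma zero_of_combo {a b p q : ℝ} (ha : 0 < a) (hb : 0 < b) (hp : 0 ≤ p) (hq : 0 ≤ q)
    (h : a * p + b * q = 0) : p = 0 ∧ q = 0 :=
  ⟨by nlinarith, by nlinarith⟩

lemma bound_of_not_frac {t w : ℝ} (h0 : 0 ≤ t) (h1 : t ≤ w) (h : ¬(0 < t ∧ t < w)) :
    t = 0 ∨ t = w := by
  by_cases ht : t = 0
  · exact Or.inl ht
  · right
    rcases lt_or_eq_of_le h1 with h2 | h2
    · exact absurd ⟨lt_of_le_of_ne h0 (Ne.symm ht), h2⟩ h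
    · exact h2

lemma mat_combo {a b : ℝ} (hab : a + b = 1) (x1 x2 : Fin n → ℝ) :
    a • mat v x1 + b • mat v x2 = mat v (fun j => a * x1 j + b * x2 j) := by
  funext i j
  simp only [Matrix.add_apply, Matrix.smul_apply, smul_eq_mul, mat]
  by_cases hi : i.val = 0
  · simp [hi]
  · simp only [hi, if_false]
    linear_combination v j * hab

/-- a vertex of Q gives an extreme point of TP. -/
lemma vtx_extreme (huv : ∑ i, u i = ∑ j, v j) {x : Fin n → ℝ} (hx : Vtx v (u 0) x) :
    mat v x ∈ Set.extremePoints ℝ (TP 2 n u v) := by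
  refine ⟨mat_mem_TP huv hx.1, ?_⟩
  intro y1 h1 y2 h2 hseg
  obtain ⟨a, b, ha, hb, hab, heq⟩ := hseg
  have hrow : ∀ i j, a * y1 i j + b * y2 i j = mat v x i j := by
    intro i j
    have := congrFun (congrFun heq i) j
    simpa [Matrix.add_apply, Matrix.smul_apply, smul_eq_mul] using this
  have hbd : ∀ j, (x j = 0 ∨ x j = v j) → y1 0 j = x j ∧ y2 0 j = x j := by
    intro j hj
    rcases hj with h0 | h0
    · have h := hrow 0 j
      rw [show mat v x 0 j = x j from rfl, h0] at h
      have := zero_of_combo ha hb (h1.1 0 j) (h2.1 0 j) h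
      rw [h0]; exact this
    · have h := hrow 1 j
      have hm : mat v x 1 j = v j - x j := rfl
      rw [hm, h0, sub_self] at h
      have hz := zero_of_combo ha hb (h1.1 1 j) (h2.1 1 j) h
      have e1 := TP_row1 h1 j
      have e2 := TP_row1 h2 j
      constructor <;> [rw [h0]; rw [h0]] <;> linarith [hz.1, hz.2]
  have key : ∀ yy : Matrix (Fin 2) (Fin n) ℝ, yy ∈ TP 2 n u v →
      (∀ j, (x j = 0 ∨ x j = v j) → yy 0 j = x j) → yy = mat v x := by
    intro yy hyy hag
    have hs : ∑ j, yy 0 j = ∑ j, x j := by rw [hyy.2.1 0, hx.1.2]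
    have hrow0 : ∀ j, yy 0 j = x j := by
      by_cases hex : ∃ p, 0 < x p ∧ x p < v p
      · obtain ⟨p, hp⟩ := hex
        have hoff : ∀ j, j ≠ p → yy 0 j = x j := by
          intro j hj
          apply hag
          apply bound_of_not_frac (hx.1.1 j).1 (hx.1.1 j).2
          intro hfr
          exact hj (hx.2 j p hfr hp)
        intro j
        by_cases hjp : j = p
        · subst hjp; exact eq_of_sum_eq hs j hoff
        · exact hoff j hjp
      · push_neg at hex
        intro j
        apply hag
        apply bound_of_not_frac (hx.1.1 j).1 (hx.1.1 j).2
        intro hfr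
        exact absurd hfr.2 (not_lt.2 (hex j hfr.1))
    funext i j
    fin_cases i
    · exact hrow0 j
    · show yy 1 j = mat v x 1 j
      rw [TP_row1 hyy j, hrow0 j]; rfl
  exact key y1 h1 (fun j hj => (hbd j hj).1)

/-- an extreme point of TP gives a vertex of Q. -/
lemma extreme_vtx (huv : ∑ i, u i = ∑ j, v j) {x : Fin n → ℝ} (hx : InQ v (u 0) x)
    (h : mat v x ∈ Set.extremePoints ℝ (TP 2 n u v)) : Vtx v (u 0) x := by
  refine ⟨hx, ?_⟩
  intro j k hj hk
  by_contra hjk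
  set ε : ℝ := min (min (x j) (v j - x j)) (min (x k) (v k - x k)) with hε
  have hεpos : 0 < ε := by
    apply lt_min (lt_min hj.1 (by linarith [hj.2])) (lt_min hk.1 (by linarith [hk.2]))
  have hεj : ε ≤ x j := le_trans (min_le_left _ _) (min_le_left _ _)
  have hεj' : ε ≤ v j - x j := le_trans (min_le_left _ _) (min_le_right _ _)
  have hεk : ε ≤ x k := le_trans (min_le_right _ _) (min_le_left _ _)
  have hεk' : ε ≤ v k - x k := le_trans (min_le_right _ _) (min_le_right _ _)
  have hQ1 : InQ v (u 0) (mv x j k ε) := by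
    refine ⟨fun l => ?_, by rw [sum_mv hjk]; exact hx.2⟩
    by_cases hl : l = j
    · subst hl; rw [mv_a]; constructor <;> linarith [(hx.1 l).2]
    · by_cases hl' : l = k
      · subst hl'; rw [mv_b hjk]; constructor <;> linarith [(hx.1 l).1]
      · rw [mv_other hl hl']; exact hx.1 l
  have hQ2 : InQ v (u 0) (mv x j k (-ε)) := by
    refine ⟨fun l => ?_, by rw [sum_mv hjk]; exact hx.2⟩
    by_cases hl : l = j
    · subst hl; rw [mv_a]; constructor <;> linarith [(hx.1 l).1]
    · by_cases hl' : l = k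
      · subst hl'; rw [mv_b hjk]; constructor <;> linarith [(hx.1 l).2]
      · rw [mv_other hl hl']; exact hx.1 l
  have hmemo : mat v x ∈ openSegment ℝ (mat v (mv x j k ε)) (mat v (mv x j k (-ε))) := by
    refine ⟨1/2, 1/2, by norm_num, by norm_num, by norm_num, ?_⟩
    rw [mat_combo (by norm_num)]
    have hfun : (fun l => 1/2 * mv x j k ε l + 1/2 * mv x j k (-ε) l) = x := by
      funext l
      by_cases hl : l = j
      · subst hl; rw [mv_a, mv_a]; ring
      · by_cases hl' : l = k
        · subst hl'; rw [mv_b hjk, mv_b hjk]; ring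
        · rw [mv_other hl hl', mv_other hl hl']; ring
    rw [hfun]
  have heq1 := h.2 (mat_mem_TP huv hQ1) (mat_mem_TP huv hQ2) hmemo
  have hev := congrFun (congrFun heq1 0) j
  have : x j - ε = x j := by simpa [mat, mv] using hev
  linarith

/-- the edge lemma: two vertices agreeing, at bounds, off two coordinates are adjacent. -/
lemma edge_adj (huv : ∑ i, u i = ∑ j, v j) {x z : Fin n → ℝ}
    (hx : Vtx v (u 0) x) (hz : Vtx v (u 0) z) (hne : x ≠ z) {a b : Fin n}
    (hoff : ∀ j, j ≠ a → j ≠ b → x j = z j ∧ (x j = 0 ∨ x j = v j)) :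
    AdjVert 2 n u v (mat v x) (mat v z) := by
  have matne : mat v x ≠ mat v z := fun h => hne (mat_inj h)
  have hX := vtx_extreme huv hx
  have hZ := vtx_extreme huv hz
  have hsub : segment ℝ (mat v x) (mat v z) ⊆ TP 2 n u v :=
    (convex_TP).segment_subset hX.1 hZ.1
  -- a ≠ b and x a ≠ z a
  have hab : a ≠ b := by
    intro h
    subst h
    apply hne
    have hoff' : ∀ j, j ≠ a → x j = z j := fun j hj => (hoff j hj hj).1
    have hs : ∑ j, x j = ∑ j, z j := by rw [hx.1.2, hz.1.2]
    funext j
    by_cases hj : j = a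
    · subst hj; exact eq_of_sum_eq hs j hoff'
    · exact hoff' j hj
  have hxza : x a ≠ z a := by
    intro h
    apply hne
    have hoff' : ∀ j, j ≠ b → x j = z j := by
      intro j hjb
      by_cases hja : j = a
      · subst hja; exact h
      · exact (hoff j hja hjb).1
    have hs : ∑ j, x j = ∑ j, z j := by rw [hx.1.2, hz.1.2]
    funext j
    by_cases hj : j = b
    · subst hj; exact eq_of_sum_eq hs j hoff'
    · exact hoff' j hj
  -- the key reconstruction step
  have step : ∀ yy : Matrix (Fin 2) (Fin n) ℝ, yy ∈ TP 2 n u v →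
      (∀ j, j ≠ a → j ≠ b → yy 0 j = x j) → yy ∈ segment ℝ (mat v x) (mat v z) := by
    intro yy hyy hag
    set τ : ℝ := (yy 0 a - x a) / (z a - x a) with hτ
    have hzx : z a - x a ≠ 0 := sub_ne_zero.2 (Ne.symm hxza)
    have hcomb : ∀ l, (1 - τ) * x l + τ * z l = x l + τ * (z l - x l) := by intro l; ring
    have hyyeq : yy = (1 - τ) • mat v x + τ • mat v z := by
      rw [mat_combo (by ring)]
      have hrow0 : ∀ l, yy 0 l = (1 - τ) * x l + τ * z l := by
        have hsum : ∑ j, yy 0 j = ∑ j, ((1 - τ) * x j + τ * z j) := by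
          rw [hyy.2.1 0, Finset.sum_add_distrib, ← Finset.mul_sum, ← Finset.mul_sum,
            hx.1.2, hz.1.2]
          ring
        have hoffb : ∀ l, l ≠ b → yy 0 l = (1 - τ) * x l + τ * z l := by
          intro l hlb
          by_cases hla : l = a
          · subst hla
            rw [hcomb, hτ, div_mul_cancel₀ _ hzx]
            ring
          · have hxl : z l = x l := ((hoff l hla hlb).1).symm
            rw [hxl, show (1 - τ) * x l + τ * x l = x l by ring]
            exact hag l hla hlb
        intro l
        by_cases hlb : l = b
        · subst hlb; exact eq_of_sum_eq hsum l hoffb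
        · exact hoffb l hlb
      funext i j
      fin_cases i
      · exact hrow0 j
      · show yy 1 j = mat v _ 1 j
        rw [TP_row1 hyy j, hrow0 j]; rfl
    -- τ ∈ [0,1] by extremality of the endpoints
    have ht0 : 0 ≤ τ := by
      by_contra hcon
      push_neg at hcon
      have h1τ : (0:ℝ) < 1 - τ := by linarith
      have hmem : mat v x ∈ openSegment ℝ yy (mat v z) := by
        have h1τne : (1:ℝ) - τ ≠ 0 := ne_of_gt h1τ
        refine ⟨1 / (1 - τ), -τ / (1 - τ), div_pos one_pos h1τ,
          div_pos (by linarith) h1τ, ?_, ?_⟩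
        · field_simp
          ring
        · rw [hyyeq, smul_add, smul_smul, smul_smul, add_assoc, ← add_smul]
          have e1 : 1 / (1 - τ) * (1 - τ) = 1 := by field_simp
          have e2 : 1 / (1 - τ) * τ + -τ / (1 - τ) = 0 := by field_simp; ring
          rw [e1, e2, one_smul, zero_smul, add_zero]
      rw [openSegment_symm] at hmem
      have := hX.2 hZ.1 hyy hmem
      exact matne this.symm
    have ht1 : τ ≤ 1 := by
      by_contra hcon
      push_neg at hcon
      have hτpos : (0:ℝ) < τ := by linarith
      have hmem : mat v z ∈ openSegment ℝ (mat v x) yy := by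
        have hτne : τ ≠ 0 := ne_of_gt hτpos
        refine ⟨1 - 1 / τ, 1 / τ, by
          have : 1 / τ < 1 := by rw [div_lt_one hτpos]; exact hcon
          linarith, one_div_pos.2 hτpos, by ring, ?_⟩
        rw [hyyeq, smul_add, smul_smul, smul_smul, ← add_assoc, ← add_smul]
        have e1 : 1 - 1 / τ + 1 / τ * (1 - τ) = 0 := by field_simp; ring
        have e2 : 1 / τ * τ = 1 := by field_simp
        rw [e1, e2, one_smul, zero_smul, zero_add]
      have := hZ.2 hX.1 hyy hmem
      exact matne this
    exact ⟨1 - τ, τ, by linarith, ht0, by ring, hyyeq.symm⟩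
  refine ⟨matne, hX, hZ, hsub, ?_⟩
  intro y1 hy1 y2 hy2 p hp hpseg
  obtain ⟨s, t, hs, ht, hst, hpeq⟩ := hp
  obtain ⟨c, d, hc, hd, hcd, hyeq⟩ := hpseg
  subst hpeq
  have hpTP : s • mat v x + t • mat v z ∈ TP 2 n u v := hsub ⟨s, t, hs, ht, hst, rfl⟩
  -- off-pair agreement for y1 and y2
  have hagree : ∀ j, j ≠ a → j ≠ b → y1 0 j = x j ∧ y2 0 j = x j := by
    intro j hja hjb
    obtain ⟨hxz, hbd⟩ := hoff j hja hjb
    have hp0 : (s • mat v x + t • mat v z) 0 j = x j := by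
      show s * x j + t * z j = x j
      rw [← hxz, ← add_mul, hst, one_mul]
    have hcomb0 : c * y1 0 j + d * y2 0 j = (s • mat v x + t • mat v z) 0 j := by
      rw [← hyeq]; rfl
    rcases hbd with h0 | h0
    · rw [hp0, h0] at hcomb0
      have := zero_of_combo hc hd (hy1.1 0 j) (hy2.1 0 j) hcomb0
      rw [h0]; exact this
    · have hprow1 : (s • mat v x + t • mat v z) 1 j = 0 := by
        rw [TP_row1 hpTP j, hp0, h0, sub_self]
      have hcomb1 : c * y1 1 j + d * y2 1 j = (s • mat v x + t • mat v z) 1 j := by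
        rw [← hyeq]; rfl
      rw [hprow1] at hcomb1
      have hzz := zero_of_combo hc hd (hy1.1 1 j) (hy2.1 1 j) hcomb1
      have e1 := TP_row1 hy1 j
      have e2 := TP_row1 hy2 j
      rw [h0]
      constructor <;> linarith [hzz.1, hzz.2]
  exact step y1 hy1 (fun j hja hjb => (hagree j hja hjb).1)


attribute [local instance] Classical.propDecidable

/-- columns not commonly fixed at a bound. -/
noncomputable def Bnd (v x y : Fin n → ℝ) : Finset (Fin n) :=
  Finset.univ.filter (fun j => ¬(x j = y j ∧ (x j = 0 ∨ x j = v j)))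

lemma mem_Bnd {v x y : Fin n → ℝ} {j : Fin n} :
    j ∈ Bnd v x y ↔ ¬(x j = y j ∧ (x j = 0 ∨ x j = v j)) := by simp [Bnd]

lemma ne_mem_Bnd {v x y : Fin n → ℝ} {j : Fin n} (h : x j ≠ y j) : j ∈ Bnd v x y :=
  mem_Bnd.2 (fun hc => h hc.1)

/-- a "two-sided special" configuration. -/
def twoS (v x y : Fin n → ℝ) : Prop :=
  ∃ p, ((0 < x p ∧ x p < v p) ∧ (0 < y p ∧ y p < v p)) ∧
    (∃ a, a ≠ p ∧ y a < x a) ∧ (∃ b, b ≠ p ∧ x b < y b)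

noncomputable def tauM (v x y : Fin n → ℝ) : ℕ :=
  (Bnd v x y).card - 1 + (if twoS v x y then 1 else 0)

noncomputable def muM (v x y : Fin n → ℝ) : ℕ :=
  2 * (Bnd v x y).card + (if twoS v x y then 1 else 0)

lemma two_le_Bnd {v : Fin n → ℝ} {c : ℝ} {x y : Fin n → ℝ} (hx : InQ v c x) (hy : InQ v c y)
    (hne : x ≠ y) : 2 ≤ (Bnd v x y).card := by
  obtain ⟨j, hj⟩ := exists_ne_of_ne hne
  rcases lt_or_gt_of_ne hj with hlt | hgt
  · obtain ⟨a, ha⟩ := exists_gt_of_lt hx hy hlt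
    exact Finset.one_lt_card.2 ⟨j, ne_mem_Bnd hj, a, ne_mem_Bnd (ne_of_gt ha), by
      intro h; subst h; exact absurd hlt (not_lt.2 ha.le)⟩
  · obtain ⟨b, hb⟩ := exists_lt_of_gt hx hy hgt
    exact Finset.one_lt_card.2 ⟨j, ne_mem_Bnd hj, b, ne_mem_Bnd (ne_of_lt hb), by
      intro h; subst h; exact absurd hgt (not_lt.2 hb.le)⟩

/-- conservation: with all deficits concentrated at `p`, any surplus is at most `p`'s deficit. -/
lemma surplus_le {v : Fin n → ℝ} {c : ℝ} {x y : Fin n → ℝ} (hx : InQ v c x) (hy : InQ v c y)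
    (p : Fin n) (hdef : ∀ j, j ≠ p → ¬(x j < y j)) {a : Fin n} (hap : a ≠ p) :
    x a - y a ≤ y p - x p := by
  have h1 := Finset.sum_erase_add (univ : Finset (Fin n)) (fun j => x j - y j) (mem_univ p)
  have hsxy : ∑ j, (x j - y j) = 0 := by
    rw [Finset.sum_sub_distrib, hx.2, hy.2, sub_self]
  have hterm : x a - y a ≤ ∑ j ∈ univ.erase p, (x j - y j) :=
    Finset.single_le_sum (f := fun j => x j - y j) (fun j hj => by
      have h := not_lt.1 (hdef j (Finset.ne_of_mem_erase hj))
      show (0:ℝ) ≤ x j - y j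
      linarith) (Finset.mem_erase.2 ⟨hap, mem_univ a⟩)
  have : ∑ j ∈ univ.erase p, (x j - y j) = y p - x p := by
    have h2 : ∑ j ∈ univ.erase p, (x j - y j) + (x p - y p) = 0 := by
      rw [h1]; exact hsxy
    linarith
  linarith

/-- symmetric version: all surpluses at `p`. -/
lemma deficit_le {v : Fin n → ℝ} {c : ℝ} {x y : Fin n → ℝ} (hx : InQ v c x) (hy : InQ v c y)
    (p : Fin n) (hsur : ∀ j, j ≠ p → ¬(y j < x j)) {b : Fin n} (hbp : b ≠ p) :
    y b - x b ≤ x p - y p := by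
  have := surplus_le hy hx p (fun j hj h => hsur j hj h) hbp
  linarith

/-- the generic vertex-move lemma: transfer δ from a to b. -/
lemma mv_step {v : Fin n → ℝ} {c : ℝ} {x : Fin n → ℝ} (hx : Vtx v c x) {a b : Fin n}
    (hab : a ≠ b) {δ : ℝ} (hδ : 0 < δ)
    (hfr : ∀ j, (0 < x j ∧ x j < v j) → j = a ∨ j = b)
    (h1 : 0 ≤ x a - δ) (h2 : x b + δ ≤ v b)
    (hnb : (x a - δ = 0 ∨ x a - δ = v a) ∨ (x b + δ = 0 ∨ x b + δ = v b)) :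
    Vtx v c (mv x a b δ) ∧ mv x a b δ ≠ x ∧
      (∀ j, j ≠ a → j ≠ b → x j = mv x a b δ j ∧ (x j = 0 ∨ x j = v j)) ∧
      (∀ j, (0 < mv x a b δ j ∧ mv x a b δ j < v j) → j = a ∨ j = b) := by
  set z := mv x a b δ with hzdef
  have hza : z a = x a - δ := mv_a
  have hzb : z b = x b + δ := mv_b hab
  have hzo : ∀ j, j ≠ a → j ≠ b → z j = x j := fun j hja hjb => mv_other hja hjb
  have hInQ : InQ v c z := by
    refine ⟨fun j => ?_, by rw [hzdef, sum_mv hab]; exact hx.1.2⟩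
    by_cases hja : j = a
    · subst hja; rw [hza]; exact ⟨h1, by linarith [(hx.1.1 j).2]⟩
    · by_cases hjb : j = b
      · subst hjb; rw [hzb]; exact ⟨by linarith [(hx.1.1 j).1], h2⟩
      · rw [hzo j hja hjb]; exact hx.1.1 j
  have hfrz : ∀ j, (0 < z j ∧ z j < v j) → j = a ∨ j = b := by
    intro j hj
    by_cases hja : j = a
    · exact Or.inl hja
    · by_cases hjb : j = b
      · exact Or.inr hjb
      · rw [hzo j hja hjb] at hj
        exact hfr j hj
  refine ⟨⟨hInQ, ?_⟩, ?_, ?_, hfrz⟩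
  · intro j k hj hk
    have hj' := hfrz j hj
    have hk' := hfrz k hk
    rcases hnb with hna | hnb'
    · have hja : j ≠ a := by
        intro h; subst h
        rcases hna with h | h <;> rw [hza] at hj <;> rw [h] at hj <;>
          [exact absurd hj.1 (lt_irrefl 0); exact absurd hj.2 (lt_irrefl _)]
      have hka : k ≠ a := by
        intro h; subst h
        rcases hna with h | h <;> rw [hza] at hk <;> rw [h] at hk <;>
          [exact absurd hk.1 (lt_irrefl 0); exact absurd hk.2 (lt_irrefl _)]
      rw [hj'.resolve_left hja, hk'.resolve_left hka]
    · have hjb : j ≠ b := by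
        intro h; subst h
        rcases hnb' with h | h <;> rw [hzb] at hj <;> rw [h] at hj <;>
          [exact absurd hj.1 (lt_irrefl 0); exact absurd hj.2 (lt_irrefl _)]
      have hkb : k ≠ b := by
        intro h; subst h
        rcases hnb' with h | h <;> rw [hzb] at hk <;> rw [h] at hk <;>
          [exact absurd hk.1 (lt_irrefl 0); exact absurd hk.2 (lt_irrefl _)]
      rw [hj'.resolve_right hjb, hk'.resolve_right hkb]
  · intro h
    have := congrFun h a
    rw [hza] at this
    linarith
  · intro j hja hjb
    refine ⟨(hzo j hja hjb).symm, ?_⟩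
    apply bound_of_not_frac (hx.1.1 j).1 (hx.1.1 j).2
    intro hfr'
    rcases hfr j hfr' with h | h
    · exact hja h
    · exact hjb h


/-- the common conclusion of a single improving move. -/
def StepTo (v : Fin n → ℝ) (c : ℝ) (x z : Fin n → ℝ) : Prop :=
  Vtx v c z ∧ z ≠ x ∧ (∃ a b, ∀ j, j ≠ a → j ≠ b → x j = z j ∧ (x j = 0 ∨ x j = v j))

variable {c : ℝ}

lemma bnd_of_vtx {v x : Fin n → ℝ} {cc : ℝ} (hx : Vtx v cc x) {g j : Fin n}
    (hg : 0 < x g ∧ x g < v g) (hj : j ≠ g) : x j = 0 ∨ x j = v j :=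
  bound_of_not_frac (hx.1.1 j).1 (hx.1.1 j).2 (fun hf => hj (hx.2 j g hf hg))

/-- Case A: a surplus and a deficit column, both with non-fractional targets. -/
lemma caseA {v x y : Fin n → ℝ} (hx : Vtx v c x) (hy : Vtx v c y) {a b : Fin n} (hab : a ≠ b)
    (hs : y a < x a) (hd : x b < y b)
    (hya : ¬(0 < y a ∧ y a < v a)) (hyb : ¬(0 < y b ∧ y b < v b))
    (hfr : ∀ j, (0 < x j ∧ x j < v j) → j = a ∨ j = b) :
    ∃ z, StepTo v c x z ∧ (∃ w, Bnd v z y ⊆ (Bnd v x y).erase w ∧ w ∈ Bnd v x y) ∧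
      ¬ twoS v z y := by
  have hya0 : y a = 0 := by
    rcases bound_of_not_frac (hy.1.1 a).1 (hy.1.1 a).2 hya with h | h
    · exact h
    · exfalso; have := (hx.1.1 a).2; linarith
  have hybv : y b = v b := by
    rcases bound_of_not_frac (hy.1.1 b).1 (hy.1.1 b).2 hyb with h | h
    · exfalso; have := (hx.1.1 b).1; linarith
    · exact h
  set δ := min (x a - y a) (y b - x b) with hδdef
  have hδpos : 0 < δ := lt_min (by linarith) (by linarith)
  have h1 : 0 ≤ x a - δ := by
    have := min_le_left (x a - y a) (y b - x b)
    have := (hy.1.1 a).1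
    simp only [← hδdef] at *
    linarith
  have h2 : x b + δ ≤ v b := by
    have := min_le_right (x a - y a) (y b - x b)
    simp only [← hδdef] at *
    linarith
  have hnb : (x a - δ = 0 ∨ x a - δ = v a) ∨ (x b + δ = 0 ∨ x b + δ = v b) := by
    rcases le_total (x a - y a) (y b - x b) with h | h
    · left; left; rw [hδdef, min_eq_left h]; linarith
    · right; right; rw [hδdef, min_eq_right h]; linarith
  obtain ⟨hvz, hzx, hoffz, hfrz⟩ := mv_step hx hab hδpos hfr h1 h2 hnb
  set z := mv x a b δ with hzdef
  have hza : z a = x a - δ := mv_a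
  have hzb : z b = x b + δ := mv_b hab
  have hzo : ∀ j, j ≠ a → j ≠ b → z j = x j := fun j hja hjb => mv_other hja hjb
  refine ⟨z, ⟨hvz, hzx, a, b, hoffz⟩, ?_, ?_⟩
  · rcases le_total (x a - y a) (y b - x b) with h | h
    · -- a is fixed
      have hzay : z a = y a := by rw [hza, hδdef, min_eq_left h]; ring
      refine ⟨a, ?_, ne_mem_Bnd (ne_of_gt hs)⟩
      intro j hj
      rw [Finset.mem_erase]
      constructor
      · intro hje; subst hje
        exact (mem_Bnd.1 hj) ⟨hzay, by rw [hzay, hya0]; left; rfl⟩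
      · by_cases hjb : j = b
        · subst hjb; exact ne_mem_Bnd (ne_of_lt hd)
        · by_cases hja : j = a
          · subst hja
            exact absurd ⟨hzay, by rw [hzay, hya0]; left; rfl⟩ (mem_Bnd.1 hj)
          · rw [mem_Bnd] at hj ⊢; rwa [hzo j hja hjb] at hj
    · -- b is fixed
      have hzby : z b = y b := by rw [hzb, hδdef, min_eq_right h]; ring
      refine ⟨b, ?_, ne_mem_Bnd (ne_of_lt hd)⟩
      intro j hj
      rw [Finset.mem_erase]
      constructor
      · intro hje; subst hje
        exact (mem_Bnd.1 hj) ⟨hzby, by rw [hzby, hybv]; right; rfl⟩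
      · by_cases hja : j = a
        · subst hja; exact ne_mem_Bnd (ne_of_gt hs)
        · by_cases hjb : j = b
          · subst hjb
            exact absurd ⟨hzby, by rw [hzby, hybv]; right; rfl⟩ (mem_Bnd.1 hj)
          · rw [mem_Bnd] at hj ⊢; rwa [hzo j hja hjb] at hj
  · rintro ⟨p, ⟨hfz, hfy⟩, _, _⟩
    rcases hfrz p hfz with hp | hp
    · subst hp; exact hya ⟨hfy.1, hfy.2⟩
    · subst hp; exact hyb ⟨hfy.1, hfy.2⟩


lemma pot_mem_Bnd {v x y : Fin n → ℝ} {f : Fin n} (hyf : 0 < y f ∧ y f < v f) :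
    f ∈ Bnd v x y := by
  rw [mem_Bnd]
  rintro ⟨heq, hbd⟩
  rcases hbd with h | h
  · rw [heq] at h; linarith [hyf.1]
  · rw [heq] at h; linarith [hyf.2]

/-- Case B: fix a surplus column by pouring it into the unique deficit "pot". -/
lemma caseB {v x y : Fin n → ℝ} (hx : Vtx v c x) (hy : Vtx v c y) {a f : Fin n} (haf : a ≠ f)
    (hs : y a < x a) (hdef : ∀ j, x j < y j → j = f) (hyf : 0 < y f ∧ y f < v f)
    (hfr : ∀ j, (0 < x j ∧ x j < v j) → j = a ∨ j = f) :
    ∃ z, StepTo v c x z ∧ (∃ w, Bnd v z y ⊆ (Bnd v x y).erase w ∧ w ∈ Bnd v x y) ∧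
      ¬ twoS v z y := by
  have hyabd : y a = 0 ∨ y a = v a :=
    bound_of_not_frac (hy.1.1 a).1 (hy.1.1 a).2 (fun hf => haf (hy.2 a f hf hyf))
  set δ := x a - y a with hδdef
  have hδpos : 0 < δ := by rw [hδdef]; linarith
  have hcons : δ ≤ y f - x f :=
    surplus_le hx.1 hy.1 f (fun j hj hlt => hj (hdef j hlt)) haf
  have h1 : 0 ≤ x a - δ := by rw [hδdef]; linarith [(hy.1.1 a).1]
  have h2 : x f + δ ≤ v f := by linarith [hyf.2]
  have hnb : (x a - δ = 0 ∨ x a - δ = v a) ∨ (x f + δ = 0 ∨ x f + δ = v f) := by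
    left
    have : x a - δ = y a := by rw [hδdef]; ring
    rw [this]; exact hyabd
  obtain ⟨hvz, hzx, hoffz, hfrz⟩ := mv_step hx haf hδpos hfr h1 h2 hnb
  set z := mv x a f δ with hzdef
  have hza : z a = y a := by rw [hzdef, mv_a, hδdef]; ring
  have hzo : ∀ j, j ≠ a → j ≠ f → z j = x j := fun j hja hjf => mv_other hja hjf
  refine ⟨z, ⟨hvz, hzx, a, f, hoffz⟩, ⟨a, ?_, ne_mem_Bnd (ne_of_gt hs)⟩, ?_⟩
  · intro j hj
    rw [Finset.mem_erase]
    have hamem : ¬ j = a := by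
      intro hje; subst hje
      exact (mem_Bnd.1 hj) ⟨hza, by rw [hza]; exact hyabd⟩
    refine ⟨hamem, ?_⟩
    by_cases hjf : j = f
    · subst hjf; exact pot_mem_Bnd hyf
    · rw [mem_Bnd] at hj ⊢; rwa [hzo j hamem hjf] at hj
  · rintro ⟨p, ⟨hfz, hfy⟩, _, ⟨b', hb'f, hb'⟩⟩
    have hp : p = f := by
      rcases hfrz p hfz with hp | hp
      · subst hp
        rw [hza] at hfz
        rcases hyabd with h | h <;> rw [h] at hfz <;> [linarith [hfz.1]; linarith [hfz.2]]
      · exact hp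
    subst hp
    -- deficit b' ≠ f in z: impossible
    by_cases hb'a : b' = a
    · subst hb'a; rw [hza] at hb'; linarith [hb']
    · rw [hzo b' hb'a hb'f] at hb'
      exact hb'f (hdef b' hb')

/-- Case C: fix a deficit column by pouring into it from the unique surplus "pot". -/
lemma caseC {v x y : Fin n → ℝ} (hx : Vtx v c x) (hy : Vtx v c y) {b f : Fin n} (hbf : b ≠ f)
    (hd : x b < y b) (hsur : ∀ j, y j < x j → j = f) (hyf : 0 < y f ∧ y f < v f)
    (hfr : ∀ j, (0 < x j ∧ x j < v j) → j = b ∨ j = f) :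
    ∃ z, StepTo v c x z ∧ (∃ w, Bnd v z y ⊆ (Bnd v x y).erase w ∧ w ∈ Bnd v x y) ∧
      ¬ twoS v z y := by
  have hybbd : y b = 0 ∨ y b = v b :=
    bound_of_not_frac (hy.1.1 b).1 (hy.1.1 b).2 (fun hf => hbf (hy.2 b f hf hyf))
  set δ := y b - x b with hδdef
  have hδpos : 0 < δ := by rw [hδdef]; linarith
  have hcons : δ ≤ x f - y f :=
    deficit_le hx.1 hy.1 f (fun j hj hlt => hj (hsur j hlt)) hbf
  have h1 : 0 ≤ x f - δ := by linarith [hyf.1]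
  have h2 : x b + δ ≤ v b := by
    have : x b + δ = y b := by rw [hδdef]; ring
    rw [this]; exact (hy.1.1 b).2
  have hnb : (x f - δ = 0 ∨ x f - δ = v f) ∨ (x b + δ = 0 ∨ x b + δ = v b) := by
    right
    have : x b + δ = y b := by rw [hδdef]; ring
    rw [this]; exact hybbd
  have hfr' : ∀ j, (0 < x j ∧ x j < v j) → j = f ∨ j = b := by
    intro j hj; rcases hfr j hj with h | h; exacts [Or.inr h, Or.inl h]
  obtain ⟨hvz, hzx, hoffz, hfrz⟩ := mv_step hx (Ne.symm hbf) hδpos hfr' h1 h2 hnb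
  set z := mv x f b δ with hzdef
  have hzb : z b = y b := by rw [hzdef, mv_b (Ne.symm hbf), hδdef]; ring
  have hzo : ∀ j, j ≠ f → j ≠ b → z j = x j := fun j hjf hjb => mv_other hjf hjb
  have hoffz' : ∀ j, j ≠ b → j ≠ f → x j = z j ∧ (x j = 0 ∨ x j = v j) :=
    fun j hjb hjf => hoffz j hjf hjb
  refine ⟨z, ⟨hvz, hzx, b, f, hoffz'⟩, ⟨b, ?_, ne_mem_Bnd (ne_of_lt hd)⟩, ?_⟩
  · intro j hj
    rw [Finset.mem_erase]
    have hbmem : ¬ j = b := by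
      intro hje; subst hje
      exact (mem_Bnd.1 hj) ⟨hzb, by rw [hzb]; exact hybbd⟩
    refine ⟨hbmem, ?_⟩
    by_cases hjf : j = f
    · subst hjf; exact pot_mem_Bnd hyf
    · rw [mem_Bnd] at hj ⊢; rwa [hzo j hjf hbmem] at hj
  · rintro ⟨p, ⟨hfz, hfy⟩, ⟨a', ha'f, ha'⟩, _⟩
    have hp : p = f := by
      rcases hfrz p hfz with hp | hp
      · exact hp
      · subst hp
        rw [hzb] at hfz
        rcases hybbd with h | h <;> rw [h] at hfz <;> [linarith [hfz.1]; linarith [hfz.2]]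
    subst hp
    by_cases ha'b : a' = b
    · subst ha'b; rw [hzb] at ha'; linarith [ha']
    · rw [hzo a' ha'f ha'b] at ha'
      exact ha'f (hsur a' ha')


lemma frac_mem_Bnd {v x y : Fin n → ℝ} {p : Fin n} (hxp : 0 < x p ∧ x p < v p) :
    p ∈ Bnd v x y := by
  rw [mem_Bnd]
  rintro ⟨_, h | h⟩ <;> [linarith [hxp.1]; linarith [hxp.2]]

/-- Case D: a two-sided pot; either fix the deficit or dump the pot. -/
lemma caseD {v x y : Fin n → ℝ} (hx : Vtx v c x) (hy : Vtx v c y) {p b : Fin n} (hbp : b ≠ p)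
    (hxp : 0 < x p ∧ x p < v p) (hyp : 0 < y p ∧ y p < v p) (hd : x b < y b) :
    ∃ z, StepTo v c x z ∧ ((∃ w, Bnd v z y ⊆ (Bnd v x y).erase w ∧ w ∈ Bnd v x y) ∨
      (Bnd v z y ⊆ Bnd v x y ∧ ¬ twoS v z y)) := by
  have hxb0 : x b = 0 := by
    rcases bnd_of_vtx hx hxp hbp with h | h
    · exact h
    · exfalso; have := (hy.1.1 b).2; linarith
  have hybv : y b = v b := by
    rcases bnd_of_vtx hy hyp hbp with h | h
    · exfalso; linarith [(hx.1.1 b).1]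
    · exact h
  have hvb : 0 < v b := by linarith [(hx.1.1 b).1]
  set δ := min (x p) (v b) with hδdef
  have hδpos : 0 < δ := lt_min hxp.1 hvb
  have h1 : 0 ≤ x p - δ := by
    have := min_le_left (x p) (v b); rw [← hδdef] at this; linarith
  have h2 : x b + δ ≤ v b := by
    have := min_le_right (x p) (v b); rw [← hδdef] at this; linarith [(hx.1.1 b).1]
  have hfr : ∀ j, (0 < x j ∧ x j < v j) → j = p ∨ j = b :=
    fun j hj => Or.inl (hx.2 j p hj hxp)
  have hnb : (x p - δ = 0 ∨ x p - δ = v p) ∨ (x b + δ = 0 ∨ x b + δ = v b) := by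
    rcases le_total (x p) (v b) with h | h
    · left; left; rw [hδdef, min_eq_left h]; ring
    · right; right; rw [hδdef, min_eq_right h, hxb0]; ring
  obtain ⟨hvz, hzx, hoffz, hfrz⟩ := mv_step hx (Ne.symm hbp) hδpos hfr h1 h2 hnb
  set z := mv x p b δ with hzdef
  have hzp : z p = x p - δ := mv_a
  have hzb : z b = x b + δ := mv_b (Ne.symm hbp)
  have hzo : ∀ j, j ≠ p → j ≠ b → z j = x j := fun j hjp hjb => mv_other hjp hjb
  refine ⟨z, ⟨hvz, hzx, p, b, hoffz⟩, ?_⟩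
  rcases le_or_gt (v b) (x p) with h | h
  · -- fix b
    left
    have hzby : z b = y b := by rw [hzb, hδdef, min_eq_right h, hxb0, hybv]; ring
    refine ⟨b, ?_, ne_mem_Bnd (ne_of_lt hd)⟩
    intro j hj
    rw [Finset.mem_erase]
    have hjb : ¬ j = b := by
      intro hje; subst hje
      exact (mem_Bnd.1 hj) ⟨hzby, by rw [hzby, hybv]; right; rfl⟩
    refine ⟨hjb, ?_⟩
    by_cases hjp : j = p
    · subst hjp; exact frac_mem_Bnd hxp
    · rw [mem_Bnd] at hj ⊢; rwa [hzo j hjp hjb] at hj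
  · -- dump the pot
    right
    have hδxp : δ = x p := by rw [hδdef, min_eq_left (le_of_lt h)]
    constructor
    · intro j hj
      by_cases hjp : j = p
      · subst hjp; exact frac_mem_Bnd hxp
      · by_cases hjb : j = b
        · subst hjb; exact ne_mem_Bnd (ne_of_lt hd)
        · rw [mem_Bnd] at hj ⊢; rwa [hzo j hjp hjb] at hj
    · rintro ⟨q, ⟨hfz, hfy⟩, _, _⟩
      rcases hfrz q hfz with hq | hq
      · subst hq; rw [hzp, hδxp] at hfz; simp at hfz
      · subst hq
        rw [hzb, hxb0, hδxp] at hfz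
        rw [hybv] at hfy
        -- z b = x p < v b, but y b = v b is not fractional
        exact absurd hfy.2 (lt_irrefl _)

lemma card_lt_of_erase {v z x y : Fin n → ℝ} {w : Fin n}
    (hsub : Bnd v z y ⊆ (Bnd v x y).erase w) (hw : w ∈ Bnd v x y) :
    (Bnd v z y).card + 1 ≤ (Bnd v x y).card := by
  have h1 := Finset.card_le_card hsub
  rw [Finset.card_erase_of_mem hw] at h1
  have h2 : 0 < (Bnd v x y).card := Finset.card_pos.2 ⟨w, hw⟩
  omega

lemma measures_le {v z x y : Fin n → ℝ} (h2 : 2 ≤ (Bnd v x y).card)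
    (hcase : ((Bnd v z y).card + 1 ≤ (Bnd v x y).card ∧ (¬ twoS v z y ∨ twoS v x y)) ∨
      ((Bnd v z y).card ≤ (Bnd v x y).card ∧ twoS v x y ∧ ¬ twoS v z y)) :
    tauM v z y + 1 ≤ tauM v x y ∧ muM v z y < muM v x y := by
  rcases hcase with ⟨hc, hd⟩ | ⟨hc, h2x, h2z⟩
  · rcases hd with h2z | h2x
    · by_cases h2x : twoS v x y
      · simp only [tauM, muM, if_pos h2x, if_neg h2z]; omega
      · simp only [tauM, muM, if_neg h2x, if_neg h2z]; omega
    · by_cases h2z : twoS v z y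
      · simp only [tauM, muM, if_pos h2x, if_pos h2z]; omega
      · simp only [tauM, muM, if_pos h2x, if_neg h2z]; omega
  · simp only [tauM, muM, if_pos h2x, if_neg h2z]; omega

/-- the master step lemma. -/
lemma step_exists {v : Fin n → ℝ} {x y : Fin n → ℝ}
    (hx : Vtx v c x) (hy : Vtx v c y) (hne : x ≠ y) :
    ∃ z, StepTo v c x z ∧ tauM v z y + 1 ≤ tauM v x y ∧ muM v z y < muM v x y := by
  have hB2 := two_le_Bnd hx.1 hy.1 hne
  by_cases hsp : ∃ p, (0 < x p ∧ x p < v p) ∧ (0 < y p ∧ y p < v p)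
  · obtain ⟨p, hxp, hyp⟩ := hsp
    by_cases hT : ∃ b, b ≠ p ∧ x b < y b
    · obtain ⟨b, hbp, hblt⟩ := hT
      by_cases hS : ∃ a, a ≠ p ∧ y a < x a
      · -- two-sided pot
        have h2x : twoS v x y := ⟨p, ⟨hxp, hyp⟩, hS, ⟨b, hbp, hblt⟩⟩
        obtain ⟨z, hstep, hcase⟩ := caseD hx hy hbp hxp hyp hblt
        refine ⟨z, hstep, measures_le hB2 ?_⟩
        rcases hcase with ⟨w, hsub, hw⟩ | ⟨hsub, hz2⟩
        · exact Or.inl ⟨card_lt_of_erase hsub hw, Or.inr h2x⟩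
        · exact Or.inr ⟨Finset.card_le_card hsub, h2x, hz2⟩
      · -- all surpluses are at the pot: case C
        push_neg at hS
        have hsur : ∀ j, y j < x j → j = p := by
          intro j hj
          by_contra hjp
          exact absurd hj (not_lt.2 (hS j hjp))
        have hfr : ∀ j, (0 < x j ∧ x j < v j) → j = b ∨ j = p :=
          fun j hj => Or.inr (hx.2 j p hj hxp)
        obtain ⟨z, hstep, ⟨w, hsub, hw⟩, hz2⟩ := caseC hx hy hbp hblt hsur hyp hfr
        exact ⟨z, hstep, measures_le hB2 (Or.inl ⟨card_lt_of_erase hsub hw, Or.inl hz2⟩)⟩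
    · -- all deficits are at the pot: case B
      push_neg at hT
      have hdef : ∀ j, x j < y j → j = p := by
        intro j hj
        by_contra hjp
        exact absurd hj (not_lt.2 (hT j hjp))
      -- find a surplus off the pot
      have hex : ∃ a, a ≠ p ∧ x a ≠ y a := by
        by_contra hcon
        push_neg at hcon
        apply hne
        funext j
        by_cases hjp : j = p
        · subst hjp
          refine eq_of_sum_eq (by rw [hx.1.2, hy.1.2]) j (fun k hk => hcon k hk)
        · exact hcon j hjp
      obtain ⟨a, hap, hane⟩ := hex
      have halt : y a < x a := by
        rcases lt_or_gt_of_ne hane with h | h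
        · exact absurd (hdef a h) hap
        · exact h
      have hfr : ∀ j, (0 < x j ∧ x j < v j) → j = a ∨ j = p :=
        fun j hj => Or.inr (hx.2 j p hj hxp)
      obtain ⟨z, hstep, ⟨w, hsub, hw⟩, hz2⟩ := caseB hx hy hap halt hdef hyp hfr
      exact ⟨z, hstep, measures_le hB2 (Or.inl ⟨card_lt_of_erase hsub hw, Or.inl hz2⟩)⟩
  · -- plain configuration
    have hx2 : ¬ twoS v x y := by
      rintro ⟨p, hp, _, _⟩
      exact hsp ⟨p, hp⟩
    obtain ⟨j0, hj0⟩ := exists_ne_of_ne hne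
    have hST : (∃ a, y a < x a) ∧ (∃ b, x b < y b) := by
      rcases lt_or_gt_of_ne hj0 with h | h
      · exact ⟨exists_gt_of_lt hx.1 hy.1 h, ⟨j0, h⟩⟩
      · exact ⟨⟨j0, h⟩, exists_lt_of_gt hx.1 hy.1 h⟩
    by_cases hg : ∃ g, 0 < x g ∧ x g < v g
    · obtain ⟨g, hgf⟩ := hg
      have hyg : ¬(0 < y g ∧ y g < v g) := fun h => hsp ⟨g, hgf, h⟩
      have hgne : x g ≠ y g := by
        intro h
        exact hyg (h ▸ hgf)
      have hfrg : ∀ j, (0 < x j ∧ x j < v j) → j = g := fun j hj => hx.2 j g hj hgf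
      rcases lt_or_gt_of_ne hgne with hlt | hgt
      · -- g is a deficit
        by_cases han : ∃ a, (y a < x a) ∧ ¬(0 < y a ∧ y a < v a)
        · obtain ⟨a, haslt, hyan⟩ := han
          have hag : a ≠ g := by
            intro h; subst h; linarith
          obtain ⟨z, hstep, ⟨w, hsub, hw⟩, hz2⟩ :=
            caseA hx hy hag haslt hlt hyan hyg (fun j hj => Or.inr (hfrg j hj))
          exact ⟨z, hstep, measures_le hB2 (Or.inl ⟨card_lt_of_erase hsub hw, Or.inl hz2⟩)⟩
        · push_neg at han
          obtain ⟨f, hflt⟩ := hST.1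
          have hyf : 0 < y f ∧ y f < v f := han f hflt
          have hsur : ∀ j, y j < x j → j = f :=
            fun j hj => hy.2 j f (han j hj) hyf
          have hgf' : g ≠ f := by
            intro h; subst h; linarith
          obtain ⟨z, hstep, ⟨w, hsub, hw⟩, hz2⟩ :=
            caseC hx hy hgf' hlt hsur hyf (fun j hj => Or.inl (hfrg j hj))
          exact ⟨z, hstep, measures_le hB2 (Or.inl ⟨card_lt_of_erase hsub hw, Or.inl hz2⟩)⟩
      · -- g is a surplus
        by_cases hbn : ∃ b, (x b < y b) ∧ ¬(0 < y b ∧ y b < v b)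
        · obtain ⟨b, hbslt, hybn⟩ := hbn
          have hgb : g ≠ b := by
            intro h; subst h; linarith
          obtain ⟨z, hstep, ⟨w, hsub, hw⟩, hz2⟩ :=
            caseA hx hy hgb hgt hbslt hyg hybn (fun j hj => Or.inl (hfrg j hj))
          exact ⟨z, hstep, measures_le hB2 (Or.inl ⟨card_lt_of_erase hsub hw, Or.inl hz2⟩)⟩
        · push_neg at hbn
          obtain ⟨f, hflt⟩ := hST.2
          have hyf : 0 < y f ∧ y f < v f := hbn f hflt
          have hdef : ∀ j, x j < y j → j = f :=
            fun j hj => hy.2 j f (hbn j hj) hyf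
          have hgf' : g ≠ f := by
            intro h; subst h; linarith
          obtain ⟨z, hstep, ⟨w, hsub, hw⟩, hz2⟩ :=
            caseB hx hy hgf' hgt hdef hyf (fun j hj => Or.inl (hfrg j hj))
          exact ⟨z, hstep, measures_le hB2 (Or.inl ⟨card_lt_of_erase hsub hw, Or.inl hz2⟩)⟩
    · -- no fractional column in x
      have hfrn : ∀ j, (0 < x j ∧ x j < v j) → False := fun j hj => hg ⟨j, hj⟩
      by_cases hbn : ∃ b, (x b < y b) ∧ ¬(0 < y b ∧ y b < v b)
      · obtain ⟨b, hbslt, hybn⟩ := hbn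
        by_cases han : ∃ a, (y a < x a) ∧ ¬(0 < y a ∧ y a < v a)
        · obtain ⟨a, haslt, hyan⟩ := han
          have hab : a ≠ b := by
            intro h; subst h; linarith
          obtain ⟨z, hstep, ⟨w, hsub, hw⟩, hz2⟩ :=
            caseA hx hy hab haslt hbslt hyan hybn (fun j hj => (hfrn j hj).elim)
          exact ⟨z, hstep, measures_le hB2 (Or.inl ⟨card_lt_of_erase hsub hw, Or.inl hz2⟩)⟩
        · push_neg at han
          obtain ⟨f, hflt⟩ := hST.1
          have hyf : 0 < y f ∧ y f < v f := han f hflt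
          have hsur : ∀ j, y j < x j → j = f :=
            fun j hj => hy.2 j f (han j hj) hyf
          have hbf : b ≠ f := by
            intro h; subst h; linarith
          obtain ⟨z, hstep, ⟨w, hsub, hw⟩, hz2⟩ :=
            caseC hx hy hbf hbslt hsur hyf (fun j hj => (hfrn j hj).elim)
          exact ⟨z, hstep, measures_le hB2 (Or.inl ⟨card_lt_of_erase hsub hw, Or.inl hz2⟩)⟩
      · push_neg at hbn
        obtain ⟨f, hflt⟩ := hST.2
        have hyf : 0 < y f ∧ y f < v f := hbn f hflt
        have hdef : ∀ j, x j < y j → j = f :=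
          fun j hj => hy.2 j f (hbn j hj) hyf
        obtain ⟨a, haslt⟩ := hST.1
        have haf : a ≠ f := by
          intro h; subst h; linarith
        obtain ⟨z, hstep, ⟨w, hsub, hw⟩, hz2⟩ :=
          caseB hx hy haf haslt hdef hyf (fun j hj => (hfrn j hj).elim)
        exact ⟨z, hstep, measures_le hB2 (Or.inl ⟨card_lt_of_erase hsub hw, Or.inl hz2⟩)⟩


/-- walk existence in the vector world, by strong induction on the measure. -/
lemma walk_exists {v : Fin n → ℝ} (m : ℕ) :
    ∀ (x y : Fin n → ℝ), Vtx v c x → Vtx v c y → x ≠ y → muM v x y ≤ m →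
    ∃ k, k ≤ tauM v x y ∧ ∃ w : ℕ → (Fin n → ℝ), w 0 = x ∧ w k = y ∧
      (∀ i < k, Vtx v c (w i) ∧ Vtx v c (w (i+1)) ∧ w i ≠ w (i+1) ∧
        (∃ a b, ∀ j, j ≠ a → j ≠ b → w i j = w (i+1) j ∧ (w i j = 0 ∨ w i j = v j))) := by
  induction m with
  | zero =>
    intro x y hx hy hne hm
    exfalso
    have h2 := two_le_Bnd hx.1 hy.1 hne
    have : 2 * (Bnd v x y).card ≤ muM v x y := Nat.le_add_right _ _
    omega
  | succ m ih =>
    intro x y hx hy hne hm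
    obtain ⟨z, ⟨hvz, hzx, a, b, hoffz⟩, htau, hmu⟩ := step_exists hx hy hne
    by_cases hzy : z = y
    · subst hzy
      refine ⟨1, by omega, fun i => Nat.casesOn i x (fun _ => z), rfl, rfl, ?_⟩
      intro i hi
      interval_cases i
      exact ⟨hx, hvz, Ne.symm hzx, a, b, hoffz⟩
    · have hmu' : muM v z y ≤ m := by omega
      obtain ⟨k', hk', w', hw0, hwk, hchain⟩ := ih z y hvz hy hzy hmu'
      refine ⟨k' + 1, by omega, fun i => Nat.casesOn i x (fun j => w' j), rfl, hwk, ?_⟩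
      intro i hi
      match i with
      | 0 =>
        refine ⟨hx, ?_, ?_, a, b, ?_⟩
        · show Vtx v c (w' 0); rw [hw0]; exact hvz
        · show x ≠ w' 0; rw [hw0]; exact Ne.symm hzx
        · show ∀ j, j ≠ a → j ≠ b → x j = w' 0 j ∧ (x j = 0 ∨ x j = v j)
          rw [hw0]; exact hoffz
      | (j+1) =>
        exact hchain j (by omega)

end TPwork

theorem stmt_10 (n : ℕ) (hn : 0 < n) (u : Fin 2 → ℝ) (v : Fin n → ℝ)
    (hu : ∀ i, 0 < u i) (hv : ∀ j, 0 < v j) (huv : ∑ i, u i = ∑ j, v j)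
    (O F : Matrix (Fin 2) (Fin n) ℝ)
    (hO : O ∈ Set.extremePoints ℝ (TP 2 n u v))
    (hF : F ∈ Set.extremePoints ℝ (TP 2 n u v)) :
    ∃ k ≤ n, ∃ w : ℕ → Matrix (Fin 2) (Fin n) ℝ,
      w 0 = O ∧ w k = F ∧ ∀ i < k, AdjVert 2 n u v (w i) (w (i + 1)) := by
  classical
  open TPwork in
  by_cases hOF : O = F
  · exact ⟨0, Nat.zero_le n, fun _ => O, rfl, hOF, fun i hi => absurd hi (Nat.not_lt_zero i)⟩
  · set xO : Fin n → ℝ := fun j => O 0 j with hxO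
    set xF : Fin n → ℝ := fun j => F 0 j with hxF
    have hOTP : O ∈ TP 2 n u v := hO.1
    have hFTP : F ∈ TP 2 n u v := hF.1
    have matO : O = TPwork.mat v xO := TPwork.TP_eq_mat hOTP
    have matF : F = TPwork.mat v xF := TPwork.TP_eq_mat hFTP
    have hVO : TPwork.Vtx v (u 0) xO :=
      TPwork.extreme_vtx huv (TPwork.TP_row0_InQ hOTP) (matO ▸ hO)
    have hVF : TPwork.Vtx v (u 0) xF :=
      TPwork.extreme_vtx huv (TPwork.TP_row0_InQ hFTP) (matF ▸ hF)
    have hne : xO ≠ xF := by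
      intro h
      apply hOF
      rw [matO, matF, h]
    obtain ⟨k, hk, w, hw0, hwk, hchain⟩ :=
      TPwork.walk_exists (c := u 0) (muM v xO xF) xO xF hVO hVF hne le_rfl
    have hcard : (TPwork.Bnd v xO xF).card ≤ n := by
      have := Finset.card_le_univ (TPwork.Bnd v xO xF)
      simpa using this
    have htn : TPwork.tauM v xO xF ≤ n := by
      unfold TPwork.tauM
      split <;> omega
    refine ⟨k, le_trans hk htn, fun i => TPwork.mat v (w i), ?_, ?_, ?_⟩
    · show TPwork.mat v (w 0) = O
      rw [hw0, ← matO]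
    · show TPwork.mat v (w k) = F
      rw [hwk, ← matF]
    · intro i hi
      obtain ⟨hv1, hv2, hne', a, b, hoff⟩ := hchain i hi
      exact TPwork.edge_adj huv hv1 hv2 hne' hoff
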